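/- arXiv:0910.5501 — 2 statements merged into one kernel-verified Lean document; each statement's English description precedes it below -/
import Mathlib

section
/- Let X be a metric space and δ > 0. Suppose A and B are finite sets with the same number of elements, equipped with their counting measures Λ_A and Λ_B respectively, and suppose f : A → X and g : B → X are maps such that the pushforward measures f_*Λ_A and g_*Λ_B on X are δ-equivalent. Then there exists a bijection h : A → B such that dist(g(h(a)), f(a)) ≤ δ for every a ∈ A. -/
open MeasureTheory

/-- The closed `δ`-neighbourhood `N_δ(A) = {x : ∃ a ∈ A, dist x a ≤ δ}` of a set `A`
in a metric space. -/
def nbhd {X : Type*} [PseudoMetricSpace X] (δ : ℝ) (A : Set X) : Set X :=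
  {x | ∃ a ∈ A, dist x a ≤ δ}

/-- Hall's-marriage-type converse: if `A` and `B` are finite sets with the same number of
elements, and `f : A → X`, `g : B → X` are maps into a metric space `X` whose pushforwards of
the counting measures are `δ`-equivalent (i.e. for every Borel set `S ⊆ X`, the number of
`a ∈ A` with `f a ∈ S` is at most the number of `b ∈ B` with `g b ∈ N_δ(S)`), then there is a
bijection `h : A → B` with `dist (g (h a)) (f a) ≤ δ` for every `a ∈ A`. -/
theorem exists_bijection_of_deltaEquiv_counting
    {X : Type*} [MetricSpace X] [MeasurableSpace X] [BorelSpace X]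
    {A B : Type*} [Fintype A] [Fintype B]
    (hcard : Fintype.card A = Fintype.card B)
    (δ : ℝ) (hδ : 0 < δ) (f : A → X) (g : B → X)
    (hequiv : ∀ S : Set X, MeasurableSet S →
      (f ⁻¹' S).ncard ≤ (g ⁻¹' nbhd δ S).ncard) :
    ∃ h : A ≃ B, ∀ a : A, dist (g (h a)) (f a) ≤ δ := by
  classical
  set t : A → Finset B := fun a => Finset.univ.filter (fun b => dist (g b) (f a) ≤ δ) with ht
  have hall : ∀ s : Finset A, s.card ≤ (s.biUnion t).card := by
    intro s
    have hS : MeasurableSet (f '' ↑s) := (Set.toFinite _).measurableSet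
    have h1 : s.card ≤ (f ⁻¹' (f '' ↑s)).ncard := by
      have hsub : (↑s : Set A) ⊆ f ⁻¹' (f '' ↑s) := Set.subset_preimage_image f ↑s
      calc s.card = (↑s : Set A).ncard := (Set.ncard_coe_finset s).symm
        _ ≤ (f ⁻¹' (f '' ↑s)).ncard := Set.ncard_le_ncard hsub (Set.toFinite _)
    have h2 : g ⁻¹' nbhd δ (f '' ↑s) = ↑(s.biUnion t) := by
      ext b
      simp only [Set.mem_preimage, nbhd, Set.mem_setOf_eq, Finset.coe_biUnion,
        Set.mem_iUnion, Finset.mem_coe, Finset.mem_biUnion, ht, Finset.mem_filter,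
        Finset.mem_univ, true_and, Set.mem_image]
      constructor
      · rintro ⟨x, ⟨a, ha, rfl⟩, hd⟩
        exact ⟨a, ha, hd⟩
      · rintro ⟨a, ha, hd⟩
        exact ⟨f a, ⟨a, ha, rfl⟩, hd⟩
    calc s.card ≤ (f ⁻¹' (f '' ↑s)).ncard := h1
      _ ≤ (g ⁻¹' nbhd δ (f '' ↑s)).ncard := hequiv _ hS
      _ = (s.biUnion t).card := by rw [h2, Set.ncard_coe_finset]
  obtain ⟨h, hinj, hmem⟩ := (Finset.all_card_le_biUnion_card_iff_exists_injective t).mp hall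
  have hbij : Function.Bijective h :=
    (Fintype.bijective_iff_injective_and_card h).mpr ⟨hinj, hcard⟩
  refine ⟨Equiv.ofBijective h hbij, fun a => ?_⟩
  have := hmem a
  simp only [ht, Finset.mem_filter, Finset.mem_univ, true_and] at this
  exact this
end

section
/- Let m > 0, s > 0 and t ∈ ℝ satisfy sinh(m)·cosh(t) ≤ sinh(s). Then |t| ≤ s − log(m). If moreover s ≤ 1, then |t| ≤ log(s) + 1 − log(m). -/
/-- If `m, s > 0` and `t ∈ ℝ` satisfy `sinh(m) · cosh(t) ≤ sinh(s)`, then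
`|t| ≤ s − log m`; and if moreover `s ≤ 1`, then `|t| ≤ log s + 1 − log m`. -/
theorem abs_le_of_sinh_cosh_le
    (m s t : ℝ) (hm : 0 < m) (hs : 0 < s)
    (h : Real.sinh m * Real.cosh t ≤ Real.sinh s) :
    |t| ≤ s - Real.log m ∧ (s ≤ 1 → |t| ≤ Real.log s + 1 - Real.log m) := by
  have hmsinh : m ≤ Real.sinh m := (Real.self_le_sinh_iff.mpr hm.le)
  have hcosh : Real.exp |t| ≤ 2 * Real.cosh t := by
    rw [← Real.cosh_abs, Real.cosh_eq]
    have := Real.exp_pos (-|t|)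
    linarith
  have key1 : m * Real.exp |t| ≤ 2 * Real.sinh s := by
    calc m * Real.exp |t| ≤ Real.sinh m * (2 * Real.cosh t) := by
          apply mul_le_mul hmsinh hcosh (Real.exp_pos _).le
          linarith [Real.sinh_pos_iff.mpr hm]
      _ = 2 * (Real.sinh m * Real.cosh t) := by ring
      _ ≤ 2 * Real.sinh s := by linarith
  have hexpabs : Real.exp (Real.log m + |t|) = m * Real.exp |t| := by
    rw [Real.exp_add, Real.exp_log hm]
  constructor
  · have h1 : 2 * Real.sinh s ≤ Real.exp s := by
      rw [Real.sinh_eq]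
      have := (Real.exp_pos (-s)).le
      linarith
    have : Real.exp (Real.log m + |t|) ≤ Real.exp s := by
      rw [hexpabs]; linarith
    have := Real.exp_le_exp.mp this
    linarith
  · intro hs1
    have hexpconv : Real.exp s ≤ 1 + s * (Real.exp 1 - 1) := by
      have hc := convexOn_exp.2 (Set.mem_univ (0:ℝ)) (Set.mem_univ (1:ℝ))
        (by linarith : (0:ℝ) ≤ 1 - s) hs.le (by ring)
      simp only [smul_eq_mul, mul_zero, mul_one, zero_add, Real.exp_zero] at hc
      linarith
    have hexpneg : 1 - s ≤ Real.exp (-s) := by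
      have := Real.add_one_le_exp (-s); linarith
    have h2 : 2 * Real.sinh s ≤ Real.exp 1 * s := by
      rw [Real.sinh_eq]; linarith
    have : Real.exp (Real.log m + |t|) ≤ Real.exp (1 + Real.log s) := by
      rw [hexpabs, Real.exp_add, Real.exp_log hs]
      linarith
    have := Real.exp_le_exp.mp this
    linarith
end
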